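/- Assume x† with Kx† = y† has finite support, satisfies the source condition K*w = x† + ηξ for some w ∈ H, η > 0 and ξ ∈ ∂‖·‖_{ℓ¹}(x†), and that K has the finite basis injectivity property; let c₁, c₂ > 0 be constants with R_η(x) − R_η(x†) ≥ c₁‖x − x†‖_{ℓ²} − c₂‖K(x − x†)‖ for all x. If ‖y^δ − y†‖ ≤ δ, then the minimizer x_{α,β}^δ of Φ_{α,β} with α = ηβ satisfies ‖x_{α,β}^δ − x†‖_{ℓ²} ≤ δ²/(2c₁β) + c₂²β/(2c₁) + c₂δ/c₁. -/

import Mathlib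

noncomputable section

open Filter Topology

/-- `ℓ²(ℕ, ℝ)`. -/
abbrev ltwo : Type := lp (fun _ : ℕ => ℝ) 2

/-- `x ∈ ℓ¹`. -/
def inL1 (x : ltwo) : Prop := Memℓp (fun i => x i) 1

/-- The `ℓ¹`-norm `‖x‖_{ℓ¹} = ∑ |xᵢ|` (junk value if `x ∉ ℓ¹`). -/
noncomputable def l1norm (x : ltwo) : ℝ := ∑' i, |x i|

/-- The elastic-net functional `Φ_{α,β}(x) = ½‖Kx − y‖² + α‖x‖₁ + (β/2)‖x‖₂²`,
real-valued on its effective domain `ℓ¹ ∩ ℓ²` (the convention `Φ = +∞` off `ℓ¹` is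
implemented by restricting all statements to `inL1`). -/
noncomputable def Phi {H : Type*} [NormedAddCommGroup H] [InnerProductSpace ℝ H]
    (K : ltwo →L[ℝ] H) (y : H) (α β : ℝ) (x : ltwo) : ℝ :=
  (1 / 2) * ‖K x - y‖ ^ 2 + α * l1norm x + (β / 2) * ‖x‖ ^ 2

/-- `x` is a minimizer of `Φ_{α,β}` over `ℓ²` (with the `+∞` convention off `ℓ¹`). -/
def IsMinimizer {H : Type*} [NormedAddCommGroup H] [InnerProductSpace ℝ H]
    (K : ltwo →L[ℝ] H) (y : H) (α β : ℝ) (x : ltwo) : Prop :=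
  inL1 x ∧ ∀ z : ltwo, inL1 z → Phi K y α β x ≤ Phi K y α β z


/-- The functional `R_η(x) = η‖x‖₁ + ½‖x‖₂²` (finite on `ℓ¹ ∩ ℓ²`). -/
noncomputable def Rfun (η : ℝ) (x : ltwo) : ℝ := η * l1norm x + (1 / 2) * ‖x‖ ^ 2

/-- `K` has the finite basis injectivity property. -/
def FBI {H : Type*} [NormedAddCommGroup H] [InnerProductSpace ℝ H]
    (K : ltwo →L[ℝ] H) : Prop :=
  ∀ I : Finset ℕ, ∀ u v : ltwo, K u = K v →
    (∀ i ∉ I, u i = 0) → (∀ i ∉ I, v i = 0) → u = v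

/-- Improved a priori convergence rate for sparse solutions: under the source
condition, sparsity, the finite basis injectivity property and the lower bound
`R_η(x) − R_η(x†) ≥ c₁‖x − x†‖₂ − c₂‖K(x − x†)‖`, the minimizer of `Φ_{ηβ,β}` with
noisy data satisfies `‖x_{α,β}^δ − x†‖₂ ≤ δ²/(2c₁β) + c₂²β/(2c₁) + c₂δ/c₁`. -/
theorem elasticNet_improved_convergence_rate
    {H : Type*} [NormedAddCommGroup H] [InnerProductSpace ℝ H] [CompleteSpace H]
    (K : ltwo →L[ℝ] H) (hFBI : FBI K)
    (ydag ydelta : H) (δ : ℝ)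
    (xdag : ltwo) (hxdag1 : inL1 xdag) (hKxdag : K xdag = ydag)
    (hsparse : {i : ℕ | xdag i ≠ 0}.Finite)
    (hnoise : ‖ydelta - ydag‖ ≤ δ)
    (η : ℝ) (hη : 0 < η) (w : H) (ξ : ℕ → ℝ)
    (hξ1 : ∀ i, xdag i ≠ 0 → ξ i = Real.sign (xdag i))
    (hξ2 : ∀ i, |ξ i| ≤ 1)
    (hsource : ∀ i, (ContinuousLinearMap.adjoint K w) i = xdag i + η * ξ i)
    (c₁ c₂ : ℝ) (hc₁ : 0 < c₁) (hc₂ : 0 < c₂)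
    (hlower : ∀ x : ltwo, inL1 x →
      c₁ * ‖x - xdag‖ - c₂ * ‖K (x - xdag)‖ ≤ Rfun η x - Rfun η xdag)
    (β : ℝ) (hβ : 0 < β)
    (x : ltwo) (hx : IsMinimizer K ydelta (η * β) β x) :
    ‖x - xdag‖ ≤ δ ^ 2 / (2 * c₁ * β) + c₂ ^ 2 * β / (2 * c₁) + c₂ * δ / c₁ := by
  obtain ⟨hxin, hmin⟩ := hx
  have h1 := hmin xdag hxdag1
  have hδ0 : 0 ≤ δ := le_trans (norm_nonneg _) hnoise
  set t := ‖K x - ydelta‖ with ht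
  have ht0 : 0 ≤ t := norm_nonneg _
  have hden : ‖K xdag - ydelta‖ ≤ δ := by
    rw [hKxdag, ← norm_neg]
    simpa [neg_sub] using hnoise
  have hKd : ‖K (x - xdag)‖ ≤ t + δ := by
    have heq : K (x - xdag) = (K x - ydelta) + (ydelta - ydag) := by
      rw [map_sub, hKxdag]; abel
    rw [heq]
    exact le_trans (norm_add_le _ _) (add_le_add le_rfl hnoise)
  have hR : β * (Rfun η x - Rfun η xdag) ≤ (1/2) * δ^2 - (1/2) * t^2 := by
    have h2 : (1/2) * ‖K xdag - ydelta‖^2 ≤ (1/2) * δ^2 := by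
      nlinarith [norm_nonneg (K xdag - ydelta), hden]
    unfold Phi at h1
    unfold Rfun
    nlinarith [h1, h2]
  have hl := hlower x hxin
  have hβl := mul_le_mul_of_nonneg_left hl hβ.le
  have hKd' := mul_le_mul_of_nonneg_left hKd (mul_pos hβ hc₂).le
  have final : (2*c₁*β) * ‖x - xdag‖ ≤ δ^2 + c₂^2*β^2 + 2*c₂*δ*β := by
    nlinarith [sq_nonneg (t - β*c₂), hβl, hR, hKd']
  have hpos : 0 < 2*c₁*β := by positivity
  have hrhs : δ ^ 2 / (2 * c₁ * β) + c₂ ^ 2 * β / (2 * c₁) + c₂ * δ / c₁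
      = (δ^2 + c₂^2*β^2 + 2*c₂*δ*β) / (2*c₁*β) := by
    field_simp
  rw [hrhs, le_div_iff₀ hpos]
  linarith [final]
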